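/- Every rooted tree whose vertices and edges are labeled by positive integers is isomorphic, as a labeled rooted tree, to the tree T(E) associated to some low-defect expression E. -/

import Mathlib

/-- `CpxW n k` : the positive integer `n` can be written using exactly `k` ones,
with an arbitrary combination of additions and multiplications. -/
inductive CpxW : ℕ → ℕ → Prop
  | one : CpxW 1 1
  | add {a b m n : ℕ} : CpxW a m → CpxW b n → CpxW (a + b) (m + n)
  | mul {a b m n : ℕ} : CpxW a m → CpxW b n → CpxW (a * b) (m + n)

/-- The integer complexity `‖n‖`. -/
noncomputable def cpx (n : ℕ) : ℕ := sInf {k | CpxW n k}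

/-- Low-defect expressions: built from positive integer constants (rule `const`,
positivity recorded in `LDE.WF`), products (rule `mul`, disjointness of the
variables recorded in `LDE.WF`) and `E·x + c` (rule `step`, freshness of `x`
recorded in `LDE.WF`).  Variables are indexed by natural numbers. -/
inductive LDE : Type
  | const (n : ℕ) : LDE
  | mul (E₁ E₂ : LDE) : LDE
  | step (E : LDE) (x : ℕ) (c : ℕ) : LDE

/-- The set of variables used by a low-defect expression. -/
def LDE.vars : LDE → Finset ℕ
  | .const _ => ∅
  | .mul E₁ E₂ => E₁.vars ∪ E₂.vars
  | .step E x _ => insert x E.vars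

/-- Well-formedness of a low-defect expression: constants are positive, the two
factors of a product use disjoint sets of variables, and the variable of
`E·x + c` does not occur in `E`. -/
def LDE.WF : LDE → Prop
  | .const n => 0 < n
  | .mul E₁ E₂ => E₁.WF ∧ E₂.WF ∧ Disjoint E₁.vars E₂.vars
  | .step E x c => E.WF ∧ x ∉ E.vars ∧ 0 < c

/-- The polynomial obtained by evaluating a low-defect expression. -/
noncomputable def LDE.poly : LDE → MvPolynomial ℕ ℤ
  | .const n => MvPolynomial.C (n : ℤ)
  | .mul E₁ E₂ => E₁.poly * E₂.poly
  | .step E x c => E.poly * MvPolynomial.X x + MvPolynomial.C (c : ℤ)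

/-- The complexity `‖E‖` of a low-defect expression. -/
noncomputable def LDE.cpx : LDE → ℕ
  | .const n => _root_.cpx n
  | .mul E₁ E₂ => E₁.cpx + E₂.cpx
  | .step E _ c => E.cpx + _root_.cpx c

/-- Low-defect trees: rooted trees whose vertices and edges are labeled by
natural numbers (positivity of the labels is recorded in `LDT.Pos`); a node
carries its label together with the list of its subtrees, each with the label of
the corresponding edge. -/
inductive LDT : Type
  | node (label : ℕ) (children : List (ℕ × LDT)) : LDT

/-- The label of the root. -/
def LDT.label : LDT → ℕ | .node n _ => n

/-- The children (edge label, subtree) of the root. -/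
def LDT.children : LDT → List (ℕ × LDT) | .node _ cs => cs

mutual
/-- All labels of a low-defect tree are positive. -/
def LDT.Pos : LDT → Prop
  | .node n cs => 0 < n ∧ LDT.PosAux cs

def LDT.PosAux : List (ℕ × LDT) → Prop
  | [] => True
  | c :: cs => 0 < c.1 ∧ c.2.Pos ∧ LDT.PosAux cs
end

/-- Isomorphism of labeled rooted trees: a root-preserving, label-preserving
graph isomorphism; concretely, the root labels agree and the children lists
match up to a permutation, recursively. -/
inductive LDT.Iso : LDT → LDT → Prop
  | node (n : ℕ) (cs₁ cs₂ : List (ℕ × LDT)) (σ : Fin cs₁.length ≃ Fin cs₂.length)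
      (hlab : ∀ i : Fin cs₁.length, (cs₁.get i).1 = (cs₂.get (σ i)).1)
      (hiso : ∀ i : Fin cs₁.length, LDT.Iso (cs₁.get i).2 (cs₂.get (σ i)).2) :
      LDT.Iso (.node n cs₁) (.node n cs₂)

/-- The low-defect tree `T(E)` associated to a low-defect expression `E`. -/
def LDE.tree : LDE → LDT
  | .const n => .node n []
  | .step E _ c => .node 1 [(c, E.tree)]
  | .mul E₁ E₂ => .node (E₁.tree.label * E₂.tree.label) (E₁.tree.children ++ E₂.tree.children)

/-- The subtree of a low-defect tree at a position (a path from the root, given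
by the list of child indices); `none` if there is no such vertex. -/
def LDT.sub? : LDT → List ℕ → Option LDT
  | t, [] => some t
  | t, i :: p =>
    match t.children[i]? with
    | some c => LDT.sub? c.2 p
    | none => none

/-- `p` is a vertex of `t` (vertices are encoded by their positions). -/
def LDT.IsVert (t : LDT) (p : List ℕ) : Prop := (t.sub? p).isSome

/-- The label of the vertex at position `p` (junk value `1` if `p` is not a
vertex). -/
def LDT.labelAt (t : LDT) (p : List ℕ) : ℕ := ((t.sub? p).map LDT.label).getD 1

/-- The list of children at position `p`. -/
def LDT.childrenAt (t : LDT) (p : List ℕ) : List (ℕ × LDT) :=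
  ((t.sub? p).map LDT.children).getD []

/-- The label of the edge joining the non-root vertex at position `q` to its
parent (junk value `1` if there is no such edge). -/
def LDT.edgeLabelAt (t : LDT) (q : List ℕ) : ℕ :=
  (((t.sub? q.dropLast).bind (fun s => s.children[q.getLast?.getD 0]?)).map
    Prod.fst).getD 1

mutual
/-- The list of all positions (vertices) of a low-defect tree. -/
def LDT.positions : LDT → List (List ℕ)
  | .node _ cs => [] :: LDT.positionsAux 0 cs

def LDT.positionsAux : ℕ → List (ℕ × LDT) → List (List ℕ)
  | _, [] => []
  | i, c :: cs => (c.2.positions.map (i :: ·)) ++ LDT.positionsAux (i + 1) cs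
end

/-- The finite set of vertices (positions) of a low-defect tree. -/
def LDT.vertFinset (t : LDT) : Finset (List ℕ) := t.positions.toFinset

/-- The finite set of edges of a low-defect tree, an edge being encoded by the
position of its lower (non-root) endpoint. -/
def LDT.edgeFinset (t : LDT) : Finset (List ℕ) := t.positions.toFinset.erase []

/-- The variable of `E` corresponding to the non-root vertex of `T(E)` at a given
position, under the canonical bijection between variables of `E` and non-root
vertices of `T(E)`. -/
def LDE.varAt : LDE → List ℕ → Option ℕ
  | .const _, _ => none
  | .step E x _, p =>
    match p with
    | 0 :: p' => if p' = [] then some x else E.varAt p'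
    | _ => none
  | .mul E₁ E₂, p =>
    match p with
    | i :: p' =>
      if i < E₁.tree.children.length then E₁.varAt (i :: p')
      else E₂.varAt ((i - E₁.tree.children.length) :: p')
    | [] => none

/-- The position of the non-root vertex of `T(E)` corresponding to a variable of
`E`, under the canonical bijection. -/
def LDE.posOf : LDE → ℕ → Option (List ℕ)
  | .const _, _ => none
  | .step E v _, x => if x = v then some [0] else (E.posOf x).map (0 :: ·)
  | .mul E₁ E₂, x =>
    match E₁.posOf x with
    | some p => some p
    | none => (E₂.posOf x).map (fun p =>
        match p with
        | i :: p' => (i + E₁.tree.children.length) :: p'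
        | [] => [])

theorem iso_refl (t : LDT) : t.Iso t := by
  induction t using LDT.rec (motive_2 := fun cs => ∀ p ∈ cs, p.2.Iso p.2)
    (motive_3 := fun p => p.2.Iso p.2) with
  | node n cs ih =>
      exact .node n cs cs (Equiv.refl _) (fun i => rfl) (fun i => ih _ (List.get_mem _ _))
  | nil => exact (List.not_mem_nil ‹_›).elim
  | cons c cs ihc ihcs =>
      rcases List.mem_cons.1 ‹_› with h | h
      · exact h ▸ ihc
      · exact ihcs _ h
  | mk a b ih => exact ih

mutual
def buildT : LDT → ℕ → LDE × ℕ
  | .node n cs, k => buildL (.const n) cs k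
def buildL : LDE → List (ℕ × LDT) → ℕ → LDE × ℕ
  | E, [], k => (E, k)
  | E, (c, t) :: cs, k =>
    let r := buildT t k
    buildL (.mul E (.step r.1 r.2 c)) cs (r.2 + 1)
end

theorem tree_eta (t : LDT) : t = .node t.label t.children := by cases t <;> rfl

mutual
theorem buildT_spec (t : LDT) (k : ℕ) (h : t.Pos) :
    k ≤ (buildT t k).2 ∧ (buildT t k).1.WF ∧
      (buildT t k).1.vars ⊆ Finset.Ico k (buildT t k).2 ∧ (buildT t k).1.tree = t := by
  cases t with
  | node n cs =>
    obtain ⟨hn, hcs⟩ := h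
    have hs := buildL_spec (.const n) cs k k hcs hn (by simp [LDE.vars]) le_rfl
    simpa [buildT, LDE.tree, LDT.label, LDT.children] using hs

theorem buildL_spec (E : LDE) (cs : List (ℕ × LDT)) (k a : ℕ) (h : LDT.PosAux cs)
    (hE : E.WF) (hv : E.vars ⊆ Finset.Ico a k) (hak : a ≤ k) :
    k ≤ (buildL E cs k).2 ∧ (buildL E cs k).1.WF ∧
      (buildL E cs k).1.vars ⊆ Finset.Ico a (buildL E cs k).2 ∧
      (buildL E cs k).1.tree = .node E.tree.label (E.tree.children ++ cs) := by
  cases cs with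
  | nil =>
    refine ⟨le_refl _, hE, hv, ?_⟩
    simp [buildL]
    exact tree_eta E.tree
  | cons p cs =>
    obtain ⟨c, t⟩ := p
    obtain ⟨hc, ht, hcs⟩ := h
    obtain ⟨hk1, hWF1, hv1, htr1⟩ := buildT_spec t k ht
    set r := buildT t k with hr
    have hE' : (LDE.mul E (.step r.1 r.2 c)).WF := by
      refine ⟨hE, ⟨hWF1, fun hm => ?_, hc⟩, ?_⟩
      · exact absurd (hv1 hm) (by simp)
      · refine Finset.disjoint_left.2 fun x hx hx' => ?_
        have h1 : x < k := (Finset.mem_Ico.1 (hv hx)).2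
        simp only [LDE.vars, Finset.mem_insert] at hx'
        have h2 : k ≤ x := by
          rcases hx' with rfl | hx'
          · exact hk1
          · exact (Finset.mem_Ico.1 (hv1 hx')).1
        omega
    have hv' : (LDE.mul E (.step r.1 r.2 c)).vars ⊆ Finset.Ico a (r.2 + 1) := by
      intro x hx
      simp only [LDE.vars, Finset.mem_union, Finset.mem_insert] at hx
      rw [Finset.mem_Ico]
      rcases hx with hx | rfl | hx
      · have := Finset.mem_Ico.1 (hv hx); omega
      · omega
      · have := Finset.mem_Ico.1 (hv1 hx); omega
    obtain ⟨hk2, hWF2, hv2, htr2⟩ :=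
      buildL_spec (LDE.mul E (.step r.1 r.2 c)) cs (r.2 + 1) a hcs hE' hv' (by omega)
    have heq : buildL E ((c, t) :: cs) k = buildL (LDE.mul E (.step r.1 r.2 c)) cs (r.2 + 1) := by
      rw [buildL]
    rw [heq]
    refine ⟨by omega, hWF2, hv2, ?_⟩
    rw [htr2]
    simp [LDE.tree, LDT.label, LDT.children, htr1]
end

/-- Every rooted tree with vertices and edges labeled by
positive integers is isomorphic, as a labeled rooted tree, to the tree of some
low-defect expression. -/
theorem every_tree_from_expression (T : LDT) (hT : T.Pos) :
    ∃ E : LDE, E.WF ∧ LDT.Iso E.tree T := by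
  obtain ⟨-, hWF, -, htr⟩ := buildT_spec T 0 hT
  refine ⟨(buildT T 0).1, hWF, ?_⟩
  rw [htr]
  exact iso_refl T
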